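/- The subspace K₊ of V-valued Laurent polynomials is isotropic for the loop-space form: Ω(f, g) = 0 for all f, g ∈ K₊. -/

import Mathlib

open Polynomial in
theorem algebraMap_ratFunc_eq_aeval (F : Type*) [Field F] (p : F[X]) :
    algebraMap F[X] (RatFunc F) p = Polynomial.aeval RatFunc.X p := by
  have h : (IsScalarTower.toAlgHom F F[X] (RatFunc F)) = Polynomial.aeval (RatFunc.X (K := F)) :=
    Polynomial.algHom_ext (by simp [RatFunc.algebraMap_X])
  exact DFunLike.congr_fun h p

open Polynomial in
/-- Injectivity of `aeval X⁻¹ : F[X] → F(q)`. -/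
theorem aeval_inv_injective (F : Type*) [Field F] :
    Function.Injective (Polynomial.aeval (RatFunc.X (K := F))⁻¹ : F[X] →ₐ[F] RatFunc F) := by
  rw [injective_iff_map_eq_zero]
  intro p hp
  haveI : Invertible (RatFunc.X (K := F))⁻¹ :=
    invertibleOfNonzero (inv_ne_zero RatFunc.X_ne_zero)
  have h2 : (⅟(RatFunc.X (K := F))⁻¹) = RatFunc.X := by
    rw [invOf_eq_inv, inv_inv]
  have hp' : Polynomial.eval₂ (algebraMap F (RatFunc F)) (RatFunc.X)⁻¹ p = 0 := by
    rwa [Polynomial.aeval_def] at hp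
  rw [← Polynomial.eval₂_reverse_eq_zero_iff (algebraMap F (RatFunc F)) (RatFunc.X)⁻¹ p] at hp'
  rw [h2] at hp'
  have h3 : algebraMap F[X] (RatFunc F) p.reverse = 0 := by
    rw [algebraMap_ratFunc_eq_aeval, Polynomial.aeval_def]
    exact hp'
  have h4 : p.reverse = 0 := RatFunc.algebraMap_injective F (by simpa using h3)
  exact Polynomial.reverse_eq_zero.mp h4

noncomputable section

open scoped TensorProduct

variable (F : Type*) [Field F]

/-- The automorphism `q ↦ q⁻¹` of `F(q)`: the unique `F`-algebra map sending `q` to `q⁻¹`. -/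
def qinv : RatFunc F →ₐ[F] RatFunc F :=
  IsFractionRing.liftAlgHom (aeval_inv_injective F)

/-- Coefficient of `qⁿ` in the Laurent-series expansion at `q = 0`, as an `F`-linear map. -/
def coeffL (n : ℤ) : RatFunc F →ₗ[F] F where
  toFun h := ((h : LaurentSeries F)).coeff n
  map_add' a b := by
    rw [map_add, HahnSeries.coeff_add]
  map_smul' c a := by
    rw [Algebra.smul_def, map_mul, RingHom.id_apply, smul_eq_mul]
    rw [show algebraMap F (RatFunc F) c = ((Polynomial.C c : Polynomial F) : RatFunc F) from
      (RatFunc.algebraMap_C c).symm, ← RatFunc.coe_coe, Polynomial.coe_C, PowerSeries.coe_C,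
      HahnSeries.C_mul_eq_smul, HahnSeries.coeff_smul, smul_eq_mul]

/-- `Res_{q=0} (h dq)`: the coefficient of `q⁻¹` in the Laurent expansion of `h` at `q = 0`. -/
def res0 (h : RatFunc F) : F := coeffL F (-1) h

/-- `Res_{q=∞} (h dq) := −Res_{q=0} (q⁻² h(q⁻¹) dq)`. -/
def resInf (h : RatFunc F) : F := - res0 F ((RatFunc.X)⁻¹ ^ 2 * qinv F h)

variable (V : Type*) [AddCommGroup V] [Module F V]

/-- The loop space `K := F(q) ⊗_F V` of `V`-valued rational functions. -/
abbrev LoopK := RatFunc F ⊗[F] V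

/-- `f(q) ↦ f(q⁻¹)` on `K`. -/
def finv : LoopK F V →ₗ[F] LoopK F V := LinearMap.rTensor V (qinv F).toLinearMap

/-- The `V`-valued coefficient of `qⁿ` in the expansion at `q = 0` of an element of `K`. -/
def vcoeff (n : ℤ) : LoopK F V →ₗ[F] V :=
  (TensorProduct.lid F V).toLinearMap ∘ₗ LinearMap.rTensor V (coeffL F n)

/-- The loop-space form
`Ω(f,g) = −Res_{q=0}(q⁻¹ B_q(f(q⁻¹),g(q)) dq) − Res_{q=∞}(q⁻¹ B_q(f(q⁻¹),g(q)) dq)`. -/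
def Omega (B : LinearMap.BilinForm F V) (f g : LoopK F V) : F :=
  - res0 F ((RatFunc.X)⁻¹ * (LinearMap.BilinForm.baseChange (RatFunc F) B) (finv F V f) g)
  - resInf F ((RatFunc.X)⁻¹ * (LinearMap.BilinForm.baseChange (RatFunc F) B) (finv F V f) g)

/-- `K₊`: `V`-valued Laurent polynomials in `q`. -/
def Kplus : Submodule F (LoopK F V) :=
  Submodule.span F {z : LoopK F V | ∃ (n : ℤ) (v : V), z = (RatFunc.X ^ n) ⊗ₜ[F] v}

/-- `K₋`: `V`-valued rational functions regular at `q = 0` and vanishing at `q = ∞`. -/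
def Kminus : Submodule F (LoopK F V) where
  carrier := {f | (∀ n : ℤ, n < 0 → vcoeff F V n f = 0) ∧
    (∀ n : ℤ, n ≤ 0 → vcoeff F V n (finv F V f) = 0)}
  add_mem' := by
    rintro a b ⟨ha1, ha2⟩ ⟨hb1, hb2⟩
    constructor
    · intro n hn; rw [map_add, ha1 n hn, hb1 n hn, add_zero]
    · intro n hn; rw [map_add, map_add, ha2 n hn, hb2 n hn, add_zero]
  zero_mem' := by
    constructor <;> intro n hn <;> simp
  smul_mem' := by
    rintro c a ⟨ha1, ha2⟩
    constructor
    · intro n hn; rw [map_smul, ha1 n hn, smul_zero]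
    · intro n hn; rw [map_smul, map_smul, ha2 n hn, smul_zero]

/-- The value at `q = 1` of a `V`-valued Laurent polynomial (the sum of its coefficients). -/
def evalOne (f : LoopK F V) : V := ∑ᶠ n : ℤ, vcoeff F V n f

/-- Scalar `K₊ ⊂ F(q)`: the Laurent polynomials. -/
def KplusS : Submodule F (RatFunc F) :=
  Submodule.span F (Set.range fun n : ℤ => (RatFunc.X : RatFunc F) ^ n)

/-- Scalar `K₋ ⊂ F(q)`: rational functions regular at `q = 0` and vanishing at `q = ∞`. -/
def KminusS : Submodule F (RatFunc F) where
  carrier := {h | (∀ n : ℤ, n < 0 → coeffL F n h = 0) ∧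
    (∀ n : ℤ, n ≤ 0 → coeffL F n (qinv F h) = 0)}
  add_mem' := by
    rintro a b ⟨ha1, ha2⟩ ⟨hb1, hb2⟩
    constructor
    · intro n hn; rw [map_add, ha1 n hn, hb1 n hn, add_zero]
    · intro n hn; rw [map_add, map_add, ha2 n hn, hb2 n hn, add_zero]
  zero_mem' := by
    constructor <;> intro n hn <;> simp
  smul_mem' := by
    rintro c a ⟨ha1, ha2⟩
    constructor
    · intro n hn; rw [map_smul, ha1 n hn, smul_zero]
    · intro n hn; rw [map_smul, map_smul, ha2 n hn, smul_zero]


lemma qinv_X : qinv F (RatFunc.X) = (RatFunc.X : RatFunc F)⁻¹ := by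
  rw [← RatFunc.algebraMap_X, qinv, IsFractionRing.liftAlgHom_apply,
    IsFractionRing.lift_algebraMap]
  simp

lemma qinv_X_zpow (k : ℤ) : qinv F ((RatFunc.X : RatFunc F) ^ k) = RatFunc.X ^ (-k) := by
  rw [map_zpow₀, qinv_X, inv_zpow, ← zpow_neg]

lemma coeffL_X_zpow (k n : ℤ) :
    coeffL F n ((RatFunc.X : RatFunc F) ^ k) = if n = k then 1 else 0 := by
  have h : (((RatFunc.X : RatFunc F) ^ k : RatFunc F) : LaurentSeries F)
      = HahnSeries.single k (1 : F) := by
    rw [map_zpow₀, RatFunc.coe_X, ← RatFunc.single_zpow]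
  show (((RatFunc.X : RatFunc F) ^ k : RatFunc F) : LaurentSeries F).coeff n = _
  rw [h, HahnSeries.coeff_single]
  split <;> rfl

lemma res0_smul_zpow (c : F) (k : ℤ) :
    res0 F (c • (RatFunc.X : RatFunc F) ^ k) = if k = -1 then c else 0 := by
  rw [res0, map_smul, coeffL_X_zpow, smul_eq_mul]
  by_cases hk : k = (-1 : ℤ) <;> simp [hk, eq_comm]

lemma resInf_smul_zpow (c : F) (k : ℤ) :
    resInf F (c • (RatFunc.X : RatFunc F) ^ k) = - (if k = -1 then c else 0) := by
  have hX : (RatFunc.X : RatFunc F) ≠ 0 := RatFunc.X_ne_zero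
  have h1 : ((RatFunc.X : RatFunc F))⁻¹ ^ 2 * qinv F (c • (RatFunc.X : RatFunc F) ^ k)
      = c • (RatFunc.X : RatFunc F) ^ (-2 - k) := by
    rw [map_smul, qinv_X_zpow, mul_smul_comm]
    congr 1
    rw [inv_pow, ← zpow_natCast, ← zpow_neg, ← zpow_add₀ hX, sub_eq_add_neg]
    norm_num
  rw [resInf, h1, res0_smul_zpow]
  by_cases hk : k = (-1 : ℤ) <;> simp [hk] <;> omega

lemma resSum_zero (c : F) (k : ℤ) :
    - res0 F (c • (RatFunc.X : RatFunc F) ^ k)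
      - resInf F (c • (RatFunc.X : RatFunc F) ^ k) = 0 := by
  rw [res0_smul_zpow, resInf_smul_zpow]; ring

lemma res0_add (a b : RatFunc F) : res0 F (a + b) = res0 F a + res0 F b := map_add _ _ _

lemma res0_smul (c : F) (a : RatFunc F) : res0 F (c • a) = c * res0 F a := by
  rw [res0, map_smul, smul_eq_mul]; rfl

lemma resInf_add (a b : RatFunc F) : resInf F (a + b) = resInf F a + resInf F b := by
  simp only [resInf, map_add, mul_add, res0_add]; ring

lemma resInf_smul (c : F) (a : RatFunc F) : resInf F (c • a) = c * resInf F a := by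
  simp only [resInf, map_smul, mul_smul_comm, res0_smul]; ring

/-- `K₊` is isotropic for the loop-space form `Ω`. -/
theorem Kplus_isotropic [FiniteDimensional F V] (B : LinearMap.BilinForm F V)
    (hB : ∀ u v : V, B u v = B v u) :
    ∀ f ∈ Kplus F V, ∀ g ∈ Kplus F V, Omega F V B f g = 0 := by
  intro f hf g hg
  set Bq := LinearMap.BilinForm.baseChange (RatFunc F) B with hBq
  -- helper: the total residue functional
  set Φ : RatFunc F → F := fun h => - res0 F h - resInf F h with hΦ
  have Φ_add : ∀ a b, Φ (a + b) = Φ a + Φ b := by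
    intro a b; simp only [Φ, res0_add, resInf_add]; ring
  have Φ_smul : ∀ (c : F) a, Φ (c • a) = c * Φ a := by
    intro c a; simp only [Φ, res0_smul, resInf_smul]; ring
  have hO : ∀ f g : LoopK F V,
      Omega F V B f g = Φ ((RatFunc.X : RatFunc F)⁻¹ * Bq (finv F V f) g) := fun _ _ => rfl
  rw [hO]
  -- bilinearity of the inner argument
  have harg_addl : ∀ (f₁ f₂ g : LoopK F V),
      (RatFunc.X : RatFunc F)⁻¹ * Bq (finv F V (f₁ + f₂)) g
        = (RatFunc.X : RatFunc F)⁻¹ * Bq (finv F V f₁) g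
          + (RatFunc.X : RatFunc F)⁻¹ * Bq (finv F V f₂) g := by
    intro f₁ f₂ g
    rw [map_add, map_add, LinearMap.add_apply, mul_add]
  have harg_addr : ∀ (f g₁ g₂ : LoopK F V),
      (RatFunc.X : RatFunc F)⁻¹ * Bq (finv F V f) (g₁ + g₂)
        = (RatFunc.X : RatFunc F)⁻¹ * Bq (finv F V f) g₁
          + (RatFunc.X : RatFunc F)⁻¹ * Bq (finv F V f) g₂ := by
    intro f g₁ g₂
    rw [map_add, mul_add]
  have harg_smull : ∀ (c : F) (f g : LoopK F V),
      (RatFunc.X : RatFunc F)⁻¹ * Bq (finv F V (c • f)) g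
        = c • ((RatFunc.X : RatFunc F)⁻¹ * Bq (finv F V f) g) := by
    intro c f g
    rw [map_smul, LinearMap.map_smul_of_tower, LinearMap.smul_apply, mul_smul_comm]
  have harg_smulr : ∀ (c : F) (f g : LoopK F V),
      (RatFunc.X : RatFunc F)⁻¹ * Bq (finv F V f) (c • g)
        = c • ((RatFunc.X : RatFunc F)⁻¹ * Bq (finv F V f) g) := by
    intro c f g
    rw [LinearMap.map_smul_of_tower, mul_smul_comm]
  -- base case
  have base : ∀ (m n : ℤ) (v w : V),
      Φ ((RatFunc.X : RatFunc F)⁻¹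
        * Bq (finv F V ((RatFunc.X ^ m : RatFunc F) ⊗ₜ[F] v)) ((RatFunc.X ^ n : RatFunc F) ⊗ₜ[F] w))
        = 0 := by
    intro m n v w
    have hX : (RatFunc.X : RatFunc F) ≠ 0 := RatFunc.X_ne_zero
    have h1 : finv F V ((RatFunc.X ^ m : RatFunc F) ⊗ₜ[F] v)
        = ((RatFunc.X : RatFunc F) ^ (-m)) ⊗ₜ[F] v := by
      rw [finv, LinearMap.rTensor_tmul, AlgHom.toLinearMap_apply, qinv_X_zpow]
    have h2 : (RatFunc.X : RatFunc F)⁻¹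
        * Bq (((RatFunc.X : RatFunc F) ^ (-m)) ⊗ₜ[F] v) ((RatFunc.X ^ n : RatFunc F) ⊗ₜ[F] w)
        = (B v w) • (RatFunc.X : RatFunc F) ^ (-1 + (-m + n)) := by
      rw [hBq, LinearMap.BilinForm.baseChange_tmul, mul_smul_comm]
      congr 1
      rw [← zpow_add₀ hX, ← zpow_neg_one, ← zpow_add₀ hX]
    rw [h1, h2]
    exact resSum_zero F (B v w) (-1 + (-m + n))
  -- now induct over both spans
  refine Submodule.span_induction₂
    (p := fun x y _ _ => Φ ((RatFunc.X : RatFunc F)⁻¹ * Bq (finv F V x) y) = 0)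
    ?_ ?_ ?_ ?_ ?_ ?_ ?_ hf hg
  · rintro x y ⟨m, v, rfl⟩ ⟨n, w, rfl⟩
    exact base m n v w
  · intro y _
    simp only [map_zero, LinearMap.zero_apply, mul_zero]
    show - res0 F 0 - resInf F 0 = 0
    rw [res0, map_zero, resInf, map_zero, mul_zero, res0, map_zero]
    ring
  · intro x _
    simp only [map_zero, mul_zero]
    show - res0 F 0 - resInf F 0 = 0
    rw [res0, map_zero, resInf, map_zero, mul_zero, res0, map_zero]
    ring
  · intro x y z _ _ _ h1 h2
    rw [harg_addl, Φ_add, h1, h2, add_zero]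
  · intro x y z _ _ _ h1 h2
    rw [harg_addr, Φ_add, h1, h2, add_zero]
  · intro c x y _ _ h1
    rw [harg_smull, Φ_smul, h1, mul_zero]
  · intro c x y _ _ h1
    rw [harg_smulr, Φ_smul, h1, mul_zero]

end
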